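/- For every n ≥ 1, the set of n-term Egyptian fractions {1/m₁ + ⋯ + 1/mₙ : m₁, …, mₙ positive integers} is nowhere dense in ℝ. -/

import Mathlib

theorem stmt_3 (n : ℕ) (hn : 1 ≤ n) :
    IsNowhereDense {x : ℝ | ∃ m : Fin n → ℕ,
      (∀ i, 1 ≤ m i) ∧ x = ∑ i, (1 : ℝ) / (m i)} := by
  set K : Set ℝ := Set.range (fun m : ℕ => (1:ℝ)/m) with hKdef
  have hK : IsCompact K := by
    have h := (tendsto_one_div_atTop_nhds_zero_nat (𝕜 := ℝ)).isCompact_insert_range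
    have h0 : (0:ℝ) ∈ K := ⟨0, by simp⟩
    rwa [Set.insert_eq_self.2 h0] at h
  set T : Set ℝ := (fun v : Fin n → ℝ => ∑ i, v i) '' (Set.univ.pi fun _ => K) with hTdef
  have hTc : IsCompact T :=
    (isCompact_univ_pi fun _ => hK).image (by continuity)
  have hsub : {x : ℝ | ∃ m : Fin n → ℕ,
      (∀ i, 1 ≤ m i) ∧ x = ∑ i, (1 : ℝ) / (m i)} ⊆ T := by
    rintro x ⟨m, -, rfl⟩
    exact ⟨fun i => 1 / m i, fun i _ => ⟨m i, rfl⟩, rfl⟩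
  have hcount : T.Countable := by
    apply Set.Countable.image
    have : (Set.univ.pi fun _ : Fin n => K) ⊆ {f : Fin n → ℝ | ∀ i, f i ∈ K} :=
      fun f hf i => hf i (Set.mem_univ i)
    exact (Set.countable_pi fun _ => Set.countable_range _).mono this
  rw [IsNowhereDense]
  have hclos : closure {x : ℝ | ∃ m : Fin n → ℕ,
      (∀ i, 1 ≤ m i) ∧ x = ∑ i, (1 : ℝ) / (m i)} ⊆ T :=
    closure_minimal hsub hTc.isClosed
  have : Dense Tᶜ := Set.Countable.dense_compl ℝ hcount
  have hint : interior T = ∅ := interior_eq_empty_iff_dense_compl.2 this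
  exact Set.eq_empty_of_subset_empty (hint ▸ interior_mono hclos)
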